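/- For every j ∈ {2,…,n}, t ∈ Γ and k ∈ B, the dynamic-programming recurrence holds: if (i) t_1 ≥ r_j + p_1 and (ii) t_{i+1} ≥ t_i + p_{i+1} for all i ∈ {1,…,m−1}, then g(j,t,k) = min { f_j(t_m) ⊕ g(j−1,t',k') : t' ∈ Γ, k' ∈ B such that for every i ∈ {1,…,m}: if k_i = 1 then t'_i ≤ t_i − p_i, and if k_i > 1 then t'_i = t_i and k'_i = k_i − 1 }, where the minimum over the empty set is +∞; otherwise g(j,t,k) = +∞. -/

import Mathlib

/-- A PFB instance has `m+1` machines and `n+1` jobs. `FeasibleUpTo p b r J c` is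
feasibility of the schedule `c` for the sub-instance `I_J` containing only the jobs
`0,…,J`: release dates are respected on the first machine, consecutive machines leave
enough processing time, two jobs of `I_J` with different completion times on a machine
differ by at least its processing time, and at most `b i` jobs of `I_J` complete at
any given time on machine `i`. -/
def FeasibleUpTo {m n : ℕ} (p b : Fin (m + 1) → ℕ) (r : Fin (n + 1) → ℕ)
    (J : Fin (n + 1)) (c : Fin (m + 1) → Fin (n + 1) → ℕ) : Prop :=
  (∀ j ≤ J, r j + p 0 ≤ c 0 j) ∧
  (∀ (i : Fin m), ∀ j ≤ J, c i.castSucc j + p i.succ ≤ c i.succ j) ∧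
  (∀ (i : Fin (m + 1)), ∀ j ≤ J, ∀ j' ≤ J,
      c i j ≠ c i j' → c i j + p i ≤ c i j' ∨ c i j' + p i ≤ c i j) ∧
  (∀ (i : Fin (m + 1)) (t : ℕ),
      (Finset.univ.filter (fun j => j ≤ J ∧ c i j = t)).card ≤ b i)

/-- `Gamma p r i = { r j' + ∑_{i' ≤ i} λ_{i'}·p_{i'} | j' a job, λ_{i'} ∈ {1,…,n+1} }`. -/
def Gamma {m n : ℕ} (p : Fin (m + 1) → ℕ) (r : Fin (n + 1) → ℕ)
    (i : Fin (m + 1)) : Set ℕ :=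
  { x | ∃ (j' : Fin (n + 1)) (lam : Fin (m + 1) → ℕ),
      (∀ i' ≤ i, 1 ≤ lam i' ∧ lam i' ≤ n + 1) ∧
      x = r j' + ∑ i' ∈ Finset.Iic i, lam i' * p i' }

/-- `𝒮(J,t,k)`: feasible schedules for `I_J` that are ordered by the job indices,
correspond to the completion-time vector `t` and batch-size vector `k` (job `J`
completes machine `i` at time `t i` in a batch of exactly `k i` jobs of `I_J`),
and are Γ-active. -/
def SchedSet {m n : ℕ} (p b : Fin (m + 1) → ℕ) (r : Fin (n + 1) → ℕ)
    (J : Fin (n + 1)) (t k : Fin (m + 1) → ℕ) :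
    Set (Fin (m + 1) → Fin (n + 1) → ℕ) :=
  { c | FeasibleUpTo p b r J c ∧
      (∀ i : Fin (m + 1), ∀ j ≤ J, ∀ j' ≤ J, j ≤ j' → c i j ≤ c i j') ∧
      (∀ i : Fin (m + 1), c i J = t i ∧
        (Finset.univ.filter (fun j' => j' ≤ J ∧ c i j' = t i)).card = k i) ∧
      (∀ i : Fin (m + 1), ∀ j ≤ J, c i j ∈ Gamma p r i) }

/-- The objective value `⊕_{j' ≤ J} f_{j'}(C_{j'})` of a schedule for `I_J`, where
`⊕` is the sum if `useSum = true` and the maximum otherwise. -/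
noncomputable def obj {m n : ℕ} (useSum : Bool) (f : Fin (n + 1) → ℕ → ℝ)
    (J : Fin (n + 1)) (c : Fin (m + 1) → Fin (n + 1) → ℕ) : ℝ :=
  if useSum then ∑ j ∈ Finset.Iic J, f j (c (Fin.last m) j)
  else (Finset.Iic J).sup' ⟨J, Finset.mem_Iic.mpr le_rfl⟩
    fun j => f j (c (Fin.last m) j)

/-- The dynamic-programming value `g(J,t,k)`: the minimum (in `ℝ ∪ {+∞} = EReal`,
with `+∞` for an empty set) of the objective over all schedules in `𝒮(J,t,k)`. -/
noncomputable def g {m n : ℕ} (useSum : Bool) (p b : Fin (m + 1) → ℕ)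
    (r : Fin (n + 1) → ℕ) (f : Fin (n + 1) → ℕ → ℝ) (J : Fin (n + 1))
    (t k : Fin (m + 1) → ℕ) : EReal :=
  sInf { x : EReal | ∃ c ∈ SchedSet p b r J t k, x = ((obj useSum f J c : ℝ) : EReal) }

/-- `combine useSum a x` is `a ⊕ x` in `EReal`: the sum `a + x` if `useSum = true`,
and `max a x` otherwise. -/
noncomputable def combine (useSum : Bool) (a : ℝ) (x : EReal) : EReal :=
  if useSum then (a : EReal) + x else max (a : EReal) x

lemma neg_add_cancel_ereal (a : ℝ) (y : EReal) : ((-a : ℝ) : EReal) + ((a : ℝ) + y) = y := by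
  induction y using EReal.rec with
  | bot => simp [EReal.add_bot]
  | coe x => rw [← EReal.coe_add, ← EReal.coe_add]; norm_num
  | top => simp

lemma add_sInf_ereal (a : ℝ) (S : Set EReal) :
    (a : EReal) + sInf S = sInf ((fun y => (a : EReal) + y) '' S) := by
  have key : ∀ (b : ℝ) (T : Set EReal), (b : EReal) + sInf T ≤ sInf ((fun y => (b:EReal)+y) '' T) := by
    intro b T
    apply le_sInf
    rintro x ⟨y, hy, rfl⟩
    exact add_le_add_right (sInf_le hy) _
  refine le_antisymm (key a S) ?_
  have h2 := key (-a) ((fun y => (a:EReal)+y) '' S)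
  have himg : (fun y => ((-a:ℝ):EReal)+y) '' ((fun y => (a:EReal)+y) '' S) = S := by
    rw [← Set.image_comp]
    convert Set.image_id S using 1
    apply Set.image_congr
    intro y _
    exact neg_add_cancel_ereal a y
  rw [himg] at h2
  calc sInf ((fun y => (a:EReal)+y) '' S)
      = (a:EReal) + (((-a:ℝ):EReal) + sInf ((fun y => (a:EReal)+y) '' S)) := by
        have := neg_add_cancel_ereal (-a) (sInf ((fun y => (a:EReal)+y) '' S))
        simp only [neg_neg] at this
        exact this.symm
    _ ≤ (a:EReal) + sInf S := add_le_add_right h2 _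

lemma max_sInf_ereal (a : ℝ) (S : Set EReal) :
    max (a : EReal) (sInf S) = sInf ((fun y => max (a : EReal) y) '' S) := by
  refine le_antisymm (le_sInf ?_) ?_
  · rintro x ⟨y, hy, rfl⟩
    exact max_le_max le_rfl (sInf_le hy)
  · rcases le_or_gt (a : EReal) (sInf S) with h | h
    · rw [max_eq_right h]
      apply le_sInf
      intro y hy
      calc sInf ((fun y => max (a:EReal) y) '' S) ≤ max (a:EReal) y := sInf_le ⟨y, hy, rfl⟩
        _ = y := max_eq_right (h.trans (sInf_le hy))
    · rw [max_eq_left h.le]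
      obtain ⟨y, hy, hya⟩ : ∃ y ∈ S, y < (a:EReal) := by
        by_contra hc
        push_neg at hc
        exact absurd (le_sInf hc) (not_le.mpr h)
      calc sInf ((fun y => max (a:EReal) y) '' S) ≤ max (a:EReal) y := sInf_le ⟨y, hy, rfl⟩
        _ = (a:EReal) := max_eq_left hya.le

lemma combine_sInf (useSum : Bool) (a : ℝ) (S : Set EReal) :
    combine useSum a (sInf S) = sInf ((combine useSum a) '' S) := by
  cases useSum <;> simp only [combine, if_true, if_false, Bool.false_eq_true]
  · exact max_sInf_ereal a S
  · exact add_sInf_ereal a S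

lemma combine_mono (useSum : Bool) (a : ℝ) : Monotone (combine useSum a) := by
  intro x y hxy
  cases useSum <;> simp only [combine, if_true, if_false, Bool.false_eq_true]
  · exact max_le_max le_rfl hxy
  · exact add_le_add_right hxy _

lemma fin_le_succ_iff {n : ℕ} (j : Fin n) (j' : Fin (n+1)) :
    j' ≤ j.succ ↔ j' = j.succ ∨ j' ≤ j.castSucc := by
  rw [Fin.le_def, Fin.le_def, Fin.ext_iff]
  simp only [Fin.val_succ, Fin.coe_castSucc]
  omega

lemma fin_succ_not_le {n : ℕ} (j : Fin n) : ¬ j.succ ≤ j.castSucc := by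
  simp [Fin.le_def]

lemma fin_ne_succ_of_le {n : ℕ} {j : Fin n} {j' : Fin (n+1)} (h : j' ≤ j.castSucc) :
    j' ≠ j.succ := by
  intro he; subst he; exact fin_succ_not_le j h

lemma fin_succ_not_mem {n : ℕ} (j : Fin n) : j.succ ∉ Finset.Iic j.castSucc := by
  simp [Fin.le_def]

lemma fin_Iic_succ {n : ℕ} (j : Fin n) :
    Finset.Iic j.succ = insert j.succ (Finset.Iic j.castSucc) := by
  ext j'
  simp [fin_le_succ_iff]

lemma obj_succ {m n : ℕ} (useSum : Bool) (f : Fin (n + 1) → ℕ → ℝ) (j : Fin n)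
    (c : Fin (m + 1) → Fin (n + 1) → ℕ) :
    ((obj useSum f j.succ c : ℝ) : EReal) =
      combine useSum (f j.succ (c (Fin.last m) j.succ))
        ((obj useSum f j.castSucc c : ℝ) : EReal) := by
  cases useSum with
  | true =>
    simp only [obj, combine, if_true]
    rw [fin_Iic_succ, Finset.sum_insert (fin_succ_not_mem j), EReal.coe_add]
  | false =>
    simp only [obj, combine, Bool.false_eq_true, if_false]
    have hne : (Finset.Iic j.castSucc).Nonempty := ⟨j.castSucc, Finset.mem_Iic.mpr le_rfl⟩
    have : (Finset.Iic j.succ).sup' ⟨j.succ, Finset.mem_Iic.mpr le_rfl⟩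
        (fun j' => f j' (c (Fin.last m) j')) =
        max (f j.succ (c (Fin.last m) j.succ))
          ((Finset.Iic j.castSucc).sup' hne (fun j' => f j' (c (Fin.last m) j'))) := by
      simp only [fin_Iic_succ]
      rw [Finset.sup'_insert hne]
    rw [this]
    exact_mod_cast Monotone.map_max (fun a b h => EReal.coe_le_coe_iff.mpr h)

lemma obj_congr {m n : ℕ} (useSum : Bool) (f : Fin (n + 1) → ℕ → ℝ) (J : Fin (n+1))
    (c1 c2 : Fin (m + 1) → Fin (n + 1) → ℕ)
    (h : ∀ j' ≤ J, c1 (Fin.last m) j' = c2 (Fin.last m) j') :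
    obj useSum f J c1 = obj useSum f J c2 := by
  cases useSum with
  | true =>
    simp only [obj, if_true]
    exact Finset.sum_congr rfl fun j' hj' => by rw [h j' (Finset.mem_Iic.mp hj')]
  | false =>
    simp only [obj, Bool.false_eq_true, if_false]
    exact Finset.sup'_congr _ rfl fun j' hj' => by rw [h j' (Finset.mem_Iic.mp hj')]

/-- The extension of a schedule for `I_{j.castSucc}` by scheduling job `j.succ`
at the times `t` belongs to `𝒮(j.succ, t, k)`. -/
lemma extend_mem {m n : ℕ} (p b : Fin (m + 1) → ℕ) (r : Fin (n + 1) → ℕ)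
    (hp : ∀ i, 1 ≤ p i) (j : Fin n) (t k t' k' : Fin (m + 1) → ℕ)
    (ht : ∀ i, t i ∈ Gamma p r i) (hk : ∀ i, 1 ≤ k i ∧ k i ≤ b i)
    (hc0 : r j.succ + p 0 ≤ t 0)
    (hchain : ∀ i : Fin m, t i.castSucc + p i.succ ≤ t i.succ)
    (hlink : ∀ i, (k i = 1 → t' i + p i ≤ t i) ∧ (1 < k i → t' i = t i ∧ k' i = k i - 1))
    (c' : Fin (m + 1) → Fin (n + 1) → ℕ) (hc' : c' ∈ SchedSet p b r j.castSucc t' k') :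
    (fun i j' => if j' = j.succ then t i else c' i j') ∈ SchedSet p b r j.succ t k := by
  obtain ⟨⟨F1, F2, F3, F4⟩, ord, htk, gam⟩ := hc'
  have hsne : (j.castSucc : Fin (n+1)) ≠ j.succ := by
    simp only [ne_eq, Fin.ext_iff, Fin.coe_castSucc, Fin.val_succ]; omega
  -- values of c' are at most t' on each machine
  have hub : ∀ i : Fin (m+1), ∀ j' ≤ j.castSucc, c' i j' ≤ t' i := by
    intro i j' hj'
    rw [← (htk i).1]
    exact ord i j' hj' j.castSucc le_rfl hj'
  have ht'le : ∀ i, t' i ≤ t i := by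
    intro i
    rcases Nat.lt_or_ge 1 (k i) with h1 | h1
    · exact ((hlink i).2 h1).1.le
    · have hk1 : k i = 1 := le_antisymm h1 (hk i).1
      have := (hlink i).1 hk1
      have := hp i
      omega
  -- the key counting identity: jobs of I_{j.castSucc} finishing machine i at time t i
  have hA : ∀ i, (Finset.univ.filter (fun j' => j' ≤ j.castSucc ∧ c' i j' = t i)).card
      = k i - 1 := by
    intro i
    rcases Nat.lt_or_ge 1 (k i) with h1 | h1
    · obtain ⟨he, hke⟩ := (hlink i).2 h1
      rw [← he, (htk i).2]
      exact hke
    · have hk1 : k i = 1 := le_antisymm h1 (hk i).1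
      have hlt : t' i < t i := by have := (hlink i).1 hk1; have := hp i; omega
      have : (Finset.univ.filter (fun j' => j' ≤ j.castSucc ∧ c' i j' = t i)) = ∅ := by
        apply Finset.filter_false_of_mem
        rintro j' -
        rintro ⟨hj', hceq⟩
        have := hub i j' hj'
        omega
      simp [this, hk1]
  -- relation between filters for the extended and original schedules
  have hBfil : ∀ (i : Fin (m+1)) (s : ℕ),
      Finset.univ.filter (fun j' => j' ≤ j.succ ∧ (if j' = j.succ then t i else c' i j') = s)
      = if t i = s
        then insert j.succ (Finset.univ.filter (fun j' => j' ≤ j.castSucc ∧ c' i j' = s))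
        else Finset.univ.filter (fun j' => j' ≤ j.castSucc ∧ c' i j' = s) := by
    intro i s
    split_ifs with hts
    · ext j'
      simp only [Finset.mem_insert, Finset.mem_filter, Finset.mem_univ, true_and]
      by_cases hj' : j' = j.succ
      · subst hj'
        simp [hts]
      · simp only [if_neg hj', fin_le_succ_iff, hj', false_or]
        tauto
    · ext j'
      simp only [Finset.mem_filter, Finset.mem_univ, true_and]
      by_cases hj' : j' = j.succ
      · subst hj'
        simp only [if_pos rfl, fin_le_succ_iff]
        constructor
        · rintro ⟨-, h⟩; exact absurd h hts
        · rintro ⟨h, -⟩; exact absurd h (fin_succ_not_le j)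
      · simp [fin_le_succ_iff, hj']
  have hBcard : ∀ i : Fin (m+1),
      (Finset.univ.filter (fun j' => j' ≤ j.succ ∧
        (if j' = j.succ then t i else c' i j') = t i)).card = k i := by
    intro i
    rw [hBfil i (t i), if_pos rfl, Finset.card_insert_of_notMem, hA i]
    · have := (hk i).1; omega
    · simp only [Finset.mem_filter, Finset.mem_univ, true_and, not_and]
      intro h
      exact absurd h (fin_succ_not_le j)
  refine ⟨⟨?_, ?_, ?_, ?_⟩, ?_, ?_, ?_⟩
  · -- release dates
    intro j' hj'
    rcases (fin_le_succ_iff j j').mp hj' with h | h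
    · subst h; simpa using hc0
    · simp only [if_neg (fin_ne_succ_of_le h)]
      exact F1 j' h
  · -- machine chain
    intro i j' hj'
    rcases (fin_le_succ_iff j j').mp hj' with h | h
    · subst h; simpa using hchain i
    · simp only [if_neg (fin_ne_succ_of_le h)]
      exact F2 i j' h
  · -- separation
    intro i j1 hj1 j2 hj2 hne
    rcases (fin_le_succ_iff j j1).mp hj1 with h1 | h1 <;>
      rcases (fin_le_succ_iff j j2).mp hj2 with h2 | h2
    · subst h1; subst h2; simp at hne
    · -- j1 = j.succ, j2 ≤ j.castSucc
      subst h1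
      simp only [if_pos rfl, if_true, ite_true, if_neg (fin_ne_succ_of_le h2)] at hne ⊢
      right
      rcases Nat.lt_or_ge 1 (k i) with hki | hki
      · obtain ⟨he, -⟩ := (hlink i).2 hki
        have hne2 : c' i j2 ≠ c' i j.castSucc := by rw [(htk i).1, he]; exact fun h => hne h.symm
        rcases F3 i j2 h2 j.castSucc le_rfl hne2 with h | h
        · rw [(htk i).1, he] at h; exact h
        · exfalso; rw [(htk i).1] at h; have := hub i j2 h2; have := hp i; omega
      · have hk1 : k i = 1 := le_antisymm hki (hk i).1
        have := (hlink i).1 hk1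
        have := hub i j2 h2
        omega
    · -- j2 = j.succ, j1 ≤ j.castSucc
      subst h2
      simp only [if_pos rfl, if_true, ite_true, if_neg (fin_ne_succ_of_le h1)] at hne ⊢
      left
      rcases Nat.lt_or_ge 1 (k i) with hki | hki
      · obtain ⟨he, -⟩ := (hlink i).2 hki
        have hne2 : c' i j1 ≠ c' i j.castSucc := by rw [(htk i).1, he]; exact hne
        rcases F3 i j1 h1 j.castSucc le_rfl hne2 with h | h
        · rw [(htk i).1, he] at h; exact h
        · exfalso; rw [(htk i).1] at h; have := hub i j1 h1; have := hp i; omega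
      · have hk1 : k i = 1 := le_antisymm hki (hk i).1
        have := (hlink i).1 hk1
        have := hub i j1 h1
        omega
    · simp only [if_neg (fin_ne_succ_of_le h1),
        if_neg (fin_ne_succ_of_le h2)] at hne ⊢
      exact F3 i j1 h1 j2 h2 hne
  · -- batch sizes
    intro i s
    rw [hBfil i s]
    split_ifs with hts
    · rw [Finset.card_insert_of_notMem, ← hts, hA i]
      · have := (hk i).1; have := (hk i).2; omega
      · simp only [Finset.mem_filter, Finset.mem_univ, true_and, not_and]
        intro h
        exact absurd h (fin_succ_not_le j)
    · exact F4 i s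
  · -- ordering
    intro i j1 hj1 j2 hj2 h12
    rcases (fin_le_succ_iff j j2).mp hj2 with h2 | h2
    · subst h2
      simp only [if_pos rfl]
      by_cases h1 : j1 = j.succ
      · simp [h1]
      · simp only [if_neg h1]
        have h1' : j1 ≤ j.castSucc := ((fin_le_succ_iff j j1).mp hj1).resolve_left h1
        exact (hub i j1 h1').trans (ht'le i)
    · have h1 : j1 ≤ j.castSucc := le_trans h12 h2
      simp only [if_neg (fin_ne_succ_of_le h1),
        if_neg (fin_ne_succ_of_le h2)]
      exact ord i j1 h1 j2 h2 h12
  · -- completion times and counts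
    intro i
    exact ⟨by simp, hBcard i⟩
  · -- Γ-activity
    intro i j' hj'
    rcases (fin_le_succ_iff j j').mp hj' with h | h
    · subst h; simpa using ht i
    · simp only [if_neg (fin_ne_succ_of_le h)]
      exact gam i j' h

/-- the dynamic-programming recurrence. For a job `j.succ ≥ 1` (i.e. any
job but the first), if (i) `t 0 ≥ r j.succ + p 0` and (ii) `t (i+1) ≥ t i + p (i+1)`
for consecutive machines, then `g(j.succ,t,k)` is the minimum over all `t' ∈ Γ`,
`k' ∈ B` satisfying: for every machine `i`, if `k i = 1` then `t' i ≤ t i - p i`, and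
if `k i > 1` then `t' i = t i` and `k' i = k i - 1`, of
`f j.succ (t_m) ⊕ g(j.castSucc,t',k')`; otherwise `g(j.succ,t,k) = +∞`. -/
theorem stmt7 {m n : ℕ} (useSum : Bool) (p b : Fin (m + 1) → ℕ)
    (r : Fin (n + 1) → ℕ) (hp : ∀ i, 1 ≤ p i) (hb : ∀ i, 1 ≤ b i ∧ b i ≤ n + 1)
    (f : Fin (n + 1) → ℕ → ℝ) (hf : ∀ j, Monotone (f j))
    (j : Fin n) (t k : Fin (m + 1) → ℕ)
    (ht : ∀ i, t i ∈ Gamma p r i) (hk : ∀ i, 1 ≤ k i ∧ k i ≤ b i) :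
    ((r j.succ + p 0 ≤ t 0 ∧
        (∀ i : Fin m, t i.castSucc + p i.succ ≤ t i.succ)) →
      g useSum p b r f j.succ t k =
        sInf { x : EReal | ∃ t' k' : Fin (m + 1) → ℕ,
          (∀ i, t' i ∈ Gamma p r i) ∧ (∀ i, 1 ≤ k' i ∧ k' i ≤ b i) ∧
          (∀ i, (k i = 1 → t' i + p i ≤ t i) ∧
            (1 < k i → t' i = t i ∧ k' i = k i - 1)) ∧
          x = combine useSum (f j.succ (t (Fin.last m)))
                (g useSum p b r f j.castSucc t' k') }) ∧
    (¬ (r j.succ + p 0 ≤ t 0 ∧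
        (∀ i : Fin m, t i.castSucc + p i.succ ≤ t i.succ)) →
      g useSum p b r f j.succ t k = ⊤) := by
  have hJ01 : (j.castSucc : Fin (n+1)) ≤ j.succ := by
    simp only [Fin.le_def, Fin.coe_castSucc, Fin.val_succ]; omega
  have hne01 : (j.castSucc : Fin (n+1)) ≠ j.succ := by
    simp only [ne_eq, Fin.ext_iff, Fin.coe_castSucc, Fin.val_succ]; omega
  constructor
  · rintro ⟨hc0, hchain⟩
    apply le_antisymm
    · -- g ≤ sInf RHS
      apply le_sInf
      rintro x ⟨t', k', ht', hk', hlink, rfl⟩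
      have hgdef : g useSum p b r f j.castSucc t' k' =
          sInf { x : EReal | ∃ c' ∈ SchedSet p b r j.castSucc t' k',
            x = ((obj useSum f j.castSucc c' : ℝ) : EReal) } := rfl
      rw [hgdef, combine_sInf]
      apply le_sInf
      rintro x ⟨y, ⟨c', hc', rfl⟩, rfl⟩
      have hmem := extend_mem p b r hp j t k t' k' ht hk hc0 hchain hlink c' hc'
      apply sInf_le
      refine ⟨fun i j' => if j' = j.succ then t i else c' i j', hmem, ?_⟩
      rw [obj_succ]
      have h2 : obj useSum f j.castSucc
          (fun i j' => if j' = j.succ then t i else c' i j') =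
          obj useSum f j.castSucc c' := by
        apply obj_congr
        intro j' hj'
        exact if_neg (fin_ne_succ_of_le hj')
      rw [h2]
      simp
    · -- sInf RHS ≤ g
      apply le_sInf
      rintro x ⟨c, hc, rfl⟩
      obtain ⟨⟨F1, F2, F3, F4⟩, ord, htk, gam⟩ := hc
      obtain ⟨t', ht'i⟩ : ∃ t' : Fin (m+1) → ℕ, ∀ i, t' i = c i j.castSucc :=
        ⟨_, fun _ => rfl⟩
      obtain ⟨k', hk'i⟩ : ∃ k' : Fin (m+1) → ℕ, ∀ i, k' i =
          (Finset.univ.filter (fun j' => j' ≤ j.castSucc ∧ c i j' = t' i)).card :=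
        ⟨_, fun _ => rfl⟩
      have ht'le : ∀ i, t' i ≤ t i := by
        intro i
        rw [ht'i i, ← (htk i).1]
        exact ord i j.castSucc hJ01 j.succ le_rfl hJ01
      have hsub : ∀ (i : Fin (m+1)) (s : ℕ),
          (Finset.univ.filter (fun j' => j' ≤ j.castSucc ∧ c i j' = s)) ⊆
          (Finset.univ.filter (fun j' => j' ≤ j.succ ∧ c i j' = s)) :=
        fun i s x hx => by
          simp only [Finset.mem_filter] at hx ⊢
          exact ⟨hx.1, hx.2.1.trans hJ01, hx.2.2⟩
      have hk'bd : ∀ i, 1 ≤ k' i ∧ k' i ≤ b i := by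
        intro i
        rw [hk'i i]
        constructor
        · exact Finset.card_pos.mpr
            ⟨j.castSucc, Finset.mem_filter.mpr ⟨Finset.mem_univ _, le_rfl, (ht'i i).symm⟩⟩
        · exact (Finset.card_le_card (hsub i (t' i))).trans (F4 i (t' i))
      have hlink : ∀ i, (k i = 1 → t' i + p i ≤ t i) ∧
          (1 < k i → t' i = t i ∧ k' i = k i - 1) := by
        intro i
        constructor
        · intro hk1
          have hne : t' i ≠ t i := by
            intro he
            have hpair : ({j.castSucc, j.succ} : Finset (Fin (n+1))) ⊆
                Finset.univ.filter (fun j' => j' ≤ j.succ ∧ c i j' = t i) := by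
              intro x hx
              rcases Finset.mem_insert.mp hx with h | h
              · subst h
                exact Finset.mem_filter.mpr ⟨Finset.mem_univ _, hJ01,
                  by rw [← ht'i i]; exact he⟩
              · rw [Finset.mem_singleton.mp h]
                exact Finset.mem_filter.mpr ⟨Finset.mem_univ _, le_rfl, (htk i).1⟩
            have := Finset.card_le_card hpair
            rw [(htk i).2, Finset.card_pair hne01] at this
            omega
          have hne2 : c i j.castSucc ≠ c i j.succ := by
            rw [(htk i).1, ← ht'i i]
            exact hne
          rcases F3 i j.castSucc hJ01 j.succ le_rfl hne2 with h | h
          · rw [(htk i).1, ← ht'i i] at h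
            exact h
          · exfalso
            rw [(htk i).1, ← ht'i i] at h
            have := ht'le i
            have := hp i
            omega
        · intro hki
          have hJ1mem : j.succ ∈
              Finset.univ.filter (fun j' => j' ≤ j.succ ∧ c i j' = t i) :=
            Finset.mem_filter.mpr ⟨Finset.mem_univ _, le_rfl, (htk i).1⟩
          have hcard : (Finset.univ.filter
              (fun j' => j' ≤ j.succ ∧ c i j' = t i)).card = k i := (htk i).2
          obtain ⟨j2, hj2⟩ : ((Finset.univ.filter
              (fun j' => j' ≤ j.succ ∧ c i j' = t i)).erase j.succ).Nonempty := by
            apply Finset.card_pos.mp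
            rw [Finset.card_erase_of_mem hJ1mem, hcard]
            omega
          have hj2ne : j2 ≠ j.succ := (Finset.mem_erase.mp hj2).1
          obtain ⟨-, hj2le, hj2eq⟩ :=
            Finset.mem_filter.mp (Finset.mem_erase.mp hj2).2
          have hj2le' : j2 ≤ j.castSucc :=
            ((fin_le_succ_iff j j2).mp hj2le).resolve_left hj2ne
          have hord := ord i j2 hj2le j.castSucc hJ01 hj2le'
          have ht'eq : t' i = t i := by
            have h1 := ht'le i
            have h2 := ht'i i
            omega
          refine ⟨ht'eq, ?_⟩
          have hAeq : Finset.univ.filter (fun j' => j' ≤ j.castSucc ∧ c i j' = t' i) =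
              (Finset.univ.filter (fun j' => j' ≤ j.succ ∧ c i j' = t i)).erase j.succ := by
            ext x
            simp only [Finset.mem_filter, Finset.mem_univ, true_and, Finset.mem_erase,
              fin_le_succ_iff, ht'eq]
            constructor
            · rintro ⟨hx, hc⟩
              exact ⟨fin_ne_succ_of_le hx, Or.inr hx, hc⟩
            · rintro ⟨hxne, hx, hc⟩
              exact ⟨hx.resolve_left hxne, hc⟩
          rw [hk'i i, hAeq, Finset.card_erase_of_mem hJ1mem, hcard]
      have hmemJ0 : c ∈ SchedSet p b r j.castSucc t' k' := by
        refine ⟨⟨?_, ?_, ?_, ?_⟩, ?_, ?_, ?_⟩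
        · exact fun j' hj' => F1 j' (hj'.trans hJ01)
        · exact fun i j' hj' => F2 i j' (hj'.trans hJ01)
        · exact fun i j1 hj1 j2 hj2 hne =>
            F3 i j1 (hj1.trans hJ01) j2 (hj2.trans hJ01) hne
        · exact fun i s => (Finset.card_le_card (hsub i s)).trans (F4 i s)
        · exact fun i j1 hj1 j2 hj2 h12 =>
            ord i j1 (hj1.trans hJ01) j2 (hj2.trans hJ01) h12
        · exact fun i => ⟨(ht'i i).symm, (hk'i i).symm⟩
        · exact fun i j' hj' => gam i j' (hj'.trans hJ01)
      calc sInf { x : EReal | ∃ t' k' : Fin (m + 1) → ℕ,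
          (∀ i, t' i ∈ Gamma p r i) ∧ (∀ i, 1 ≤ k' i ∧ k' i ≤ b i) ∧
          (∀ i, (k i = 1 → t' i + p i ≤ t i) ∧
            (1 < k i → t' i = t i ∧ k' i = k i - 1)) ∧
          x = combine useSum (f j.succ (t (Fin.last m)))
                (g useSum p b r f j.castSucc t' k') }
          ≤ combine useSum (f j.succ (t (Fin.last m)))
              (g useSum p b r f j.castSucc t' k') :=
            sInf_le ⟨t', k', fun i => by rw [ht'i i]; exact gam i j.castSucc hJ01, hk'bd, hlink, rfl⟩
        _ ≤ combine useSum (f j.succ (t (Fin.last m)))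
              ((obj useSum f j.castSucc c : ℝ) : EReal) :=
            combine_mono useSum _ (sInf_le ⟨c, hmemJ0, rfl⟩)
        _ = ((obj useSum f j.succ c : ℝ) : EReal) := by
            rw [obj_succ, (htk (Fin.last m)).1]
  · intro hnot
    have hempty : { x : EReal | ∃ c ∈ SchedSet p b r j.succ t k,
        x = ((obj useSum f j.succ c : ℝ) : EReal) } = ∅ := by
      ext x
      simp only [Set.mem_setOf_eq, Set.mem_empty_iff_false, iff_false, not_exists]
      rintro c ⟨hc, -⟩
      obtain ⟨⟨F1, F2, F3, F4⟩, ord, htk, gam⟩ := hc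
      exact hnot ⟨by rw [← (htk 0).1]; exact F1 j.succ le_rfl,
        fun i => by rw [← (htk i.castSucc).1, ← (htk i.succ).1]; exact F2 i j.succ le_rfl⟩
    show sInf _ = ⊤
    rw [hempty, sInf_empty]
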